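/- Define the weight of (a,b,c,d) ∈ ℤ₄⁴ in D(2,0) as w(a,b)+w(c,d), where w(x,y)=0 iff (x,y)=(0,0), w(x,y)=1 iff (x,y) ∈ {(0,1),(0,3),(1,0),(3,0),(1,1),(3,3)}, and w(x,y)=2 otherwise. Then every nonzero element of the subgroup D'' of ℤ₄⁴ generated by (0,1,2,3) and (1,0,1,2) has D(2,0)-weight at least 3. -/

import Mathlib

/-- The Shrikhande weight on `ZMod 4 × ZMod 4`. -/
def shW (p : ZMod 4 × ZMod 4) : ℕ :=
  if p = 0 then 0
  else if p ∈ ({(0,1),(0,3),(1,0),(3,0),(1,1),(3,3)} : Finset (ZMod 4 × ZMod 4)) then 1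
  else 2

/-- The weight of a vector of `ℤ₄⁴` viewed as a vertex of the Doob graph `D(2,0)`. -/
def doobW20 (v : Fin 4 → ZMod 4) : ℕ := shW (v 0, v 1) + shW (v 2, v 3)

private lemma check : ∀ a b : ZMod 4,
    (a • ![0,1,2,3] + b • ![1,0,1,2] : Fin 4 → ZMod 4) ≠ 0 →
    3 ≤ doobW20 (a • ![0,1,2,3] + b • ![1,0,1,2]) := by decide

theorem stmt_8 :
    ∀ v ∈ AddSubgroup.closure ({![0,1,2,3], ![1,0,1,2]} : Set (Fin 4 → ZMod 4)),
      v ≠ 0 → 3 ≤ doobW20 v := by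
  intro v hv
  have h : ∃ a b : ZMod 4, v = a • ![0,1,2,3] + b • ![1,0,1,2] := by
    induction hv using AddSubgroup.closure_induction with
    | mem x hx =>
      rcases hx with h | h
      · exact ⟨1, 0, by simp [h]⟩
      · exact ⟨0, 1, by simp [Set.mem_singleton_iff.mp h]⟩
    | zero => exact ⟨0, 0, by simp⟩
    | add x y hx hy ihx ihy =>
      obtain ⟨a, b, rfl⟩ := ihx
      obtain ⟨c, d, rfl⟩ := ihy
      exact ⟨a + c, b + d, by module⟩
    | neg x hx ih =>
      obtain ⟨a, b, rfl⟩ := ih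
      exact ⟨-a, -b, by module⟩
  obtain ⟨a, b, rfl⟩ := h
  exact check a b
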